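/- Every decomposition of P_G arises from a weight assignment a: [d] → {-1,0,1} of one of exactly two types: (Type I) no vertex has weight 0, every positive edge has weight multiset {1,1}, every negative edge has weight multiset {-1,-1}; or (Type II) at least one vertex has weight 0, every positive edge has weights {1,0}, and every negative edge has weights {-1,0}. -/

import Mathlib

open scoped BigOperators

/-- `ρ(i,j) = e_i + e_j` -/
noncomputable def rho {d : ℕ} (i j : Fin d) : Fin d → ℝ :=
  fun t => (if t = i then 1 else 0) + (if t = j then 1 else 0)

/-- The edge polytope of a graph `G` on `[d]`. -/
noncomputable def edgePolytope {d : ℕ} (G : SimpleGraph (Fin d)) : Set (Fin d → ℝ) :=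
  convexHull ℝ {x | ∃ i j, G.Adj i j ∧ x = rho i j}

/-- dot product -/
def dotp {d : ℕ} (a x : Fin d → ℝ) : ℝ := ∑ t, a t * x t

/-- a polytope is integral if all its vertices (extreme points) are lattice points -/
def IsIntegralSet {d : ℕ} (P : Set (Fin d → ℝ)) : Prop :=
  ∀ x ∈ Set.extremePoints ℝ P, ∀ t, ∃ z : ℤ, x t = (z : ℝ)

/-- The hyperplane `a·x = b` decomposes `P`: it meets the relative interior of `P`,
both open sides meet `P`, and both closed half-space pieces are integral. -/
def Decomposes {d : ℕ} (P : Set (Fin d → ℝ)) (a : Fin d → ℝ) (b : ℝ) : Prop :=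
  (∃ x ∈ intrinsicInterior ℝ P, dotp a x = b) ∧
  (∃ y ∈ P, dotp a y < b) ∧ (∃ y ∈ P, b < dotp a y) ∧
  IsIntegralSet (P ∩ {x | b ≤ dotp a x}) ∧
  IsIntegralSet (P ∩ {x | dotp a x ≤ b})

lemma dotp_rho {d : ℕ} (a : Fin d → ℝ) (i j : Fin d) : dotp a (rho i j) = a i + a j := by
  simp [dotp, rho, mul_add, mul_ite, Finset.sum_add_distrib]

lemma dotp_add {d : ℕ} (a x y : Fin d → ℝ) : dotp a (x + y) = dotp a x + dotp a y := by
  simp [dotp, mul_add, Finset.sum_add_distrib]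

lemma dotp_smul {d : ℕ} (a : Fin d → ℝ) (c : ℝ) (x : Fin d → ℝ) :
    dotp a (c • x) = c * dotp a x := by
  simp only [dotp, Pi.smul_apply, smul_eq_mul, Finset.mul_sum]
  exact Finset.sum_congr rfl fun t _ => by ring

lemma dotp_neg {d : ℕ} (a x : Fin d → ℝ) : dotp (-a) x = -dotp a x := by
  simp [dotp]

lemma dotp_sum {d : ℕ} {ι : Type*} (a : Fin d → ℝ) (t : Finset ι) (f : ι → Fin d → ℝ) :
    dotp a (∑ m ∈ t, f m) = ∑ m ∈ t, dotp a (f m) := by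
  simp only [dotp, Finset.sum_apply, Finset.mul_sum]
  rw [Finset.sum_comm]

/-- representation of a point of the edge polytope -/
lemma rep {d : ℕ} (G : SimpleGraph (Fin d)) {y : Fin d → ℝ} (hy : y ∈ edgePolytope G) :
    ∃ (ι : Type) (t : Finset ι) (w : ι → ℝ) (p q : ι → Fin d),
      (∀ m ∈ t, 0 ≤ w m) ∧ ∑ m ∈ t, w m = 1 ∧ (∀ m ∈ t, G.Adj (p m) (q m)) ∧
      y = ∑ m ∈ t, w m • rho (p m) (q m) := by
  rw [edgePolytope, convexHull_eq] at hy
  obtain ⟨ι, t, w, z, hw0, hw1, hz, hcm⟩ := hy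
  classical
  have hpq : ∀ m : {x // x ∈ t}, ∃ pq : Fin d × Fin d,
      G.Adj pq.1 pq.2 ∧ z m.1 = rho pq.1 pq.2 := fun m => by
    obtain ⟨i, j, h1, h2⟩ := hz m.1 m.2
    exact ⟨(i, j), h1, h2⟩
  choose pq hadj hrho using hpq
  refine ⟨{x // x ∈ t}, t.attach, fun m => w m.1, fun m => (pq m).1, fun m => (pq m).2,
    fun m _ => hw0 m.1 m.2, ?_, fun m _ => hadj m, ?_⟩
  · rw [← hw1]; exact Finset.sum_attach t w
  · rw [← hcm, Finset.centerMass_eq_of_sum_1 _ _ hw1]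
    rw [← Finset.sum_attach t (fun m => w m • z m)]
    exact Finset.sum_congr rfl fun m _ => by rw [← hrho m]

/-- bound on a linear functional over the edge polytope -/
lemma bnd {d : ℕ} {G : SimpleGraph (Fin d)} {χ : Fin d → ℝ} {M : ℝ}
    (bound : ∀ p q, G.Adj p q → dotp χ (rho p q) ≤ M)
    {y : Fin d → ℝ} (hy : y ∈ edgePolytope G) : dotp χ y ≤ M := by
  obtain ⟨ι, t, w, p, q, hw0, hw1, hadj, hrep⟩ := rep G hy
  rw [hrep, dotp_sum]
  calc ∑ m ∈ t, dotp χ (w m • rho (p m) (q m)) ≤ ∑ m ∈ t, w m * M := by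
        refine Finset.sum_le_sum fun m hm => ?_
        rw [dotp_smul]
        exact mul_le_mul_of_nonneg_left (bound _ _ (hadj m hm)) (hw0 m hm)
    _ = M := by rw [← Finset.sum_mul, hw1, one_mul]

/-- support restriction: a point of the polytope maximizing a linear functional whose
maximum over vertices is attained only at `v₁, v₂` lies on the segment `[v₁, v₂]`. -/
lemma aux {d : ℕ} {G : SimpleGraph (Fin d)} {χ : Fin d → ℝ} {M : ℝ}
    {v₁ v₂ : Fin d → ℝ}
    (bound : ∀ p q, G.Adj p q → dotp χ (rho p q) ≤ M)
    (eqc : ∀ p q, G.Adj p q → dotp χ (rho p q) = M → rho p q = v₁ ∨ rho p q = v₂)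
    {y : Fin d → ℝ} (hy : y ∈ edgePolytope G) (hM : M ≤ dotp χ y) :
    ∃ β : ℝ, 0 ≤ β ∧ β ≤ 1 ∧ y = (1 - β) • v₁ + β • v₂ := by
  classical
  obtain ⟨ι, t, w, p, q, hw0, hw1, hadj, hrep⟩ := rep G hy
  have hval : dotp χ y = ∑ m ∈ t, w m * dotp χ (rho (p m) (q m)) := by
    rw [hrep, dotp_sum]
    exact Finset.sum_congr rfl fun m _ => dotp_smul _ _ _
  -- each supported vertex attains the max
  have hyM : dotp χ y = M := le_antisymm (bnd bound hy) hM
  have hzero : ∑ m ∈ t, w m * (M - dotp χ (rho (p m) (q m))) = 0 := by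
    simp_rw [mul_sub]
    rw [Finset.sum_sub_distrib, ← Finset.sum_mul, hw1, one_mul, ← hval, hyM, sub_self]
  have hsup : ∀ m ∈ t, w m ≠ 0 → dotp χ (rho (p m) (q m)) = M := by
    intro m hm hwm
    have := (Finset.sum_eq_zero_iff_of_nonneg (fun m hm => by
      have := bound _ _ (hadj m hm)
      have := hw0 m hm
      nlinarith : ∀ m ∈ t, 0 ≤ w m * (M - dotp χ (rho (p m) (q m))))).1 hzero m hm
    rcases mul_eq_zero.1 this with h | h
    · exact absurd h hwm
    · linarith [h]
  -- split the sum
  set t₁ := t.filter (fun m => rho (p m) (q m) = v₁) with ht₁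
  set β := ∑ m ∈ t.filter (fun m => ¬ rho (p m) (q m) = v₁), w m with hβ
  have hα : ∑ m ∈ t₁, w m + β = 1 := by
    rw [ht₁, hβ, Finset.sum_filter_add_sum_filter_not, hw1]
  have hβ0 : 0 ≤ β := Finset.sum_nonneg fun m hm => hw0 m (Finset.mem_of_mem_filter m hm)
  have hα0 : 0 ≤ ∑ m ∈ t₁, w m := Finset.sum_nonneg fun m hm => hw0 m (Finset.mem_of_mem_filter m hm)
  refine ⟨β, hβ0, by linarith, ?_⟩
  have h1 : ∑ m ∈ t₁, w m • rho (p m) (q m) = (∑ m ∈ t₁, w m) • v₁ := by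
    rw [Finset.sum_smul]
    exact Finset.sum_congr rfl fun m hm => by rw [(Finset.mem_filter.1 hm).2]
  have h2 : ∑ m ∈ t.filter (fun m => ¬ rho (p m) (q m) = v₁), w m • rho (p m) (q m) = β • v₂ := by
    rw [hβ, Finset.sum_smul]
    refine Finset.sum_congr rfl fun m hm => ?_
    obtain ⟨hmt, hmv⟩ := Finset.mem_filter.1 hm
    by_cases hwm : w m = 0
    · rw [hwm, zero_smul, zero_smul]
    · rcases eqc _ _ (hadj m hmt) (hsup m hmt hwm) with h | h
      · exact absurd h hmv
      · rw [h]
  have : y = (∑ m ∈ t₁, w m) • v₁ + β • v₂ := by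
    rw [hrep, ← Finset.sum_filter_add_sum_filter_not t (fun m => rho (p m) (q m) = v₁), h1, h2]
  rw [this]
  congr 1
  rw [show (1 : ℝ) - β = ∑ m ∈ t₁, w m by linarith]

lemma comboeq {θ₁ θ₂ u v M : ℝ} (hθ₁ : 0 < θ₁) (hθ₂ : 0 < θ₂) (hθs : θ₁ + θ₂ = 1)
    (hu : u ≤ M) (hv : v ≤ M) (hc : θ₁ * u + θ₂ * v = M) : u = M := by
  by_contra h
  have h' : u < M := lt_of_le_of_ne hu h
  have h1 := add_lt_add_of_lt_of_le (mul_lt_mul_of_pos_left h' hθ₁)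
    (mul_le_mul_of_nonneg_left hv hθ₂.le)
  have h2 : θ₁ * M + θ₂ * M = M := by rw [← add_mul, hθs, one_mul]
  linarith

/-- the main contradiction lemma: a segment between a positive and a negative vertex
which is a face of the polytope gives a non-integral extreme point of the half. -/
lemma keyMain {d : ℕ} {G : SimpleGraph (Fin d)} {a : Fin d → ℝ} {i j k l : Fin d}
    (hij : G.Adj i j) (hkl : G.Adj k l)
    (hjk : j ≠ k) (hjl : j ≠ l)
    (hs : 0 < a i + a j) (ht : a k + a l < 0)
    {χ : Fin d → ℝ} {M : ℝ}
    (bound : ∀ p q, G.Adj p q → dotp χ (rho p q) ≤ M)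
    (eqc : ∀ p q, G.Adj p q → dotp χ (rho p q) = M → rho p q = rho i j ∨ rho p q = rho k l)
    (hM1 : dotp χ (rho i j) = M) (hM2 : dotp χ (rho k l) = M)
    (hint : IsIntegralSet (edgePolytope G ∩ {x | 0 ≤ dotp a x})) : False := by
  set s := a i + a j with hsdef
  set t := a k + a l with htdef
  have hst : 0 < s - t := by linarith
  set lam := s / (s - t) with hlam
  have hlam0 : 0 < lam := div_pos hs hst
  have hlam1 : lam < 1 := (div_lt_one hst).2 (by linarith)
  have hlameq : lam * (s - t) = s := div_mul_cancel₀ s (ne_of_gt hst)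
  set x : Fin d → ℝ := (1 - lam) • rho i j + lam • rho k l with hx
  have hv1P : rho i j ∈ edgePolytope G := subset_convexHull ℝ _ ⟨i, j, hij, rfl⟩
  have hv2P : rho k l ∈ edgePolytope G := subset_convexHull ℝ _ ⟨k, l, hkl, rfl⟩
  have hxP : x ∈ edgePolytope G :=
    convex_convexHull ℝ _ hv1P hv2P (by linarith) (by linarith) (by ring)
  have hdx : ∀ c : ℝ, dotp a ((1 - c) • rho i j + c • rho k l) = (1 - c) * s + c * t := by
    intro c
    rw [dotp_add, dotp_smul, dotp_smul, dotp_rho, dotp_rho]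
  have hx0 : dotp a x = 0 := by
    rw [hx, hdx]; nlinarith
  -- x is an extreme point of the positive half
  have hext : x ∈ Set.extremePoints ℝ (edgePolytope G ∩ {x | 0 ≤ dotp a x}) := by
    refine ⟨⟨hxP, by simp [hx0]⟩, ?_⟩
    rintro y ⟨hyP, hy0⟩ z ⟨hzP, hz0⟩ ⟨θ₁, θ₂, hθ₁, hθ₂, hθs, hcomb⟩
    have hχx : dotp χ x = M := by
      rw [hx, dotp_add, dotp_smul, dotp_smul, hM1, hM2]; ring
    have hχy : dotp χ y ≤ M := bnd bound hyP
    have hχz : dotp χ z ≤ M := bnd bound hzP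
    have hχcomb : θ₁ * dotp χ y + θ₂ * dotp χ z = M := by
      rw [← hχx, ← hcomb, dotp_add, dotp_smul, dotp_smul]
    have hχy' : dotp χ y = M := comboeq hθ₁ hθ₂ hθs hχy hχz hχcomb
    have hχz' : dotp χ z = M := comboeq hθ₂ hθ₁ (by linarith) hχz hχy (by linarith)
    have hacomb : θ₁ * dotp a y + θ₂ * dotp a z = 0 := by
      rw [← hx0, ← hcomb, dotp_add, dotp_smul, dotp_smul]
    simp only [Set.mem_setOf_eq] at hy0 hz0
    have hay : dotp a y = 0 := by
      have := comboeq hθ₁ hθ₂ hθs (neg_nonpos.2 hy0) (neg_nonpos.2 hz0)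
        (by linarith) (M := 0)
      linarith
    have haz : dotp a z = 0 := by
      have := comboeq hθ₂ hθ₁ (by linarith) (neg_nonpos.2 hz0) (neg_nonpos.2 hy0)
        (by linarith) (M := 0)
      linarith
    have hfin : ∀ u : Fin d → ℝ, u ∈ edgePolytope G → dotp χ u = M → dotp a u = 0 → u = x := by
      intro u huP hχu hau
      obtain ⟨β, hβ0, hβ1, hurep⟩ := aux bound eqc huP (le_of_eq hχu.symm)
      have : (1 - β) * s + β * t = 0 := by rw [← hdx β, ← hurep, hau]
      have hβlam : β = lam := by
        have h1 : β * (s - t) = s := by linarith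
        have := hlameq
        have : (β - lam) * (s - t) = 0 := by linarith [h1, hlameq]
        rcases mul_eq_zero.1 this with h | h
        · linarith
        · exact absurd h (ne_of_gt hst)
      rw [hurep, hβlam, hx]
    exact hfin y hyP hχy' hay
  -- integrality of the coordinate j gives a contradiction
  obtain ⟨z, hz⟩ := hint x hext j
  have hxj : x j = 1 - lam := by
    rw [hx]
    have h1 : rho i j j = 1 := by
      simp [rho, (hij.ne.symm : j ≠ i)]
    have h2 : rho k l j = 0 := by
      simp [rho, hjk, hjl]
    simp [h1, h2]
  rw [hxj] at hz
  have h0z : (0 : ℝ) < z := by rw [← hz]; linarith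
  have hz1 : (z : ℝ) < 1 := by rw [← hz]; linarith
  have : (1 : ℤ) ≤ z := by exact_mod_cast h0z
  have : (z : ℝ) ≥ 1 := by exact_mod_cast this
  linarith

lemma rho_comm {d : ℕ} (i j : Fin d) : rho i j = rho j i := by
  funext t; simp [rho]; ring

/-- a positive and a negative edge cannot share a vertex -/
lemma keyS {d : ℕ} {G : SimpleGraph (Fin d)} {a : Fin d → ℝ} {i j k : Fin d}
    (hij : G.Adj i j) (hik : G.Adj i k) (hjk : j ≠ k)
    (hs : 0 < a i + a j) (ht : a i + a k < 0)
    (hint : IsIntegralSet (edgePolytope G ∩ {x | 0 ≤ dotp a x})) : False := by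
  classical
  set χ : Fin d → ℝ := fun v => if v = i then 1 else if v = j ∨ v = k then 1/2 else 0 with hχ
  have hval : ∀ v, (χ v = 1 ∧ v = i) ∨ (χ v = 1/2 ∧ (v = j ∨ v = k)) ∨ χ v = 0 := by
    intro v
    by_cases h1 : v = i
    · exact Or.inl ⟨by simp [hχ, h1], h1⟩
    by_cases h2 : v = j ∨ v = k
    · exact Or.inr (Or.inl ⟨by simp [hχ, h1, h2], h2⟩)
    · exact Or.inr (Or.inr (by simp [hχ, h1, h2]))
  have bound : ∀ p q, G.Adj p q → dotp χ (rho p q) ≤ 3/2 := by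
    intro p q hpq
    rw [dotp_rho]
    rcases hval p with ⟨e1, hp⟩ | ⟨e1, hp⟩ | e1 <;>
      rcases hval q with ⟨e2, hq⟩ | ⟨e2, hq⟩ | e2 <;> rw [e1, e2] <;> try norm_num
    exact absurd (hp.trans hq.symm) hpq.ne
  have eqc : ∀ p q, G.Adj p q → dotp χ (rho p q) = 3/2 →
      rho p q = rho i j ∨ rho p q = rho i k := by
    intro p q hpq heq
    rw [dotp_rho] at heq
    rcases hval p with ⟨e1, hp⟩ | ⟨e1, hp⟩ | e1 <;>
      rcases hval q with ⟨e2, hq⟩ | ⟨e2, hq⟩ | e2 <;> rw [e1, e2] at heq <;> try norm_num at heq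
    · -- p = i, q ∈ {j, k}
      subst hp
      rcases hq with rfl | rfl
      · exact Or.inl rfl
      · exact Or.inr rfl
    · -- p ∈ {j, k}, q = i
      subst hq
      rcases hp with rfl | rfl
      · exact Or.inl (rho_comm _ _)
      · exact Or.inr (rho_comm _ _)
  have hM1 : dotp χ (rho i j) = 3/2 := by
    rw [dotp_rho]
    have h1 : χ i = 1 := by simp [hχ]
    have h2 : χ j = 1/2 := by simp [hχ, hij.ne']
    rw [h1, h2]; norm_num
  have hM2 : dotp χ (rho i k) = 3/2 := by
    rw [dotp_rho]
    have h1 : χ i = 1 := by simp [hχ]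
    have h2 : χ k = 1/2 := by simp [hχ, hik.ne']
    rw [h1, h2]; norm_num
  exact keyMain hij hik hij.ne' hjk hs ht bound eqc hM1 hM2 hint

/-- disjoint positive and negative edges with no zero 4-cycle: contradiction -/
lemma keyQ {d : ℕ} {G : SimpleGraph (Fin d)} {a : Fin d → ℝ} {i j k l : Fin d}
    (hij : G.Adj i j) (hkl : G.Adj k l)
    (hik : i ≠ k) (hil : i ≠ l) (hjk : j ≠ k) (hjl : j ≠ l)
    (hAjk : ¬ G.Adj j k) (hAjl : ¬ G.Adj j l)
    (hs : 0 < a i + a j) (ht : a k + a l < 0)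
    (hint : IsIntegralSet (edgePolytope G ∩ {x | 0 ≤ dotp a x})) : False := by
  classical
  set χ : Fin d → ℝ := fun v => if v = i then 1/4 else if v = j then 3/4
    else if v = k ∨ v = l then 1/2 else 0 with hχ
  have hval : ∀ v, (χ v = 1/4 ∧ v = i) ∨ (χ v = 3/4 ∧ v = j) ∨
      (χ v = 1/2 ∧ (v = k ∨ v = l)) ∨ χ v = 0 := by
    intro v
    by_cases h1 : v = i
    · exact Or.inl ⟨by simp [hχ, h1], h1⟩
    by_cases h2 : v = j
    · subst h2
      exact Or.inr (Or.inl ⟨by simp [hχ, h1], rfl⟩)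
    by_cases h3 : v = k ∨ v = l
    · exact Or.inr (Or.inr (Or.inl ⟨by simp [hχ, h1, h2, h3], h3⟩))
    · exact Or.inr (Or.inr (Or.inr (by simp [hχ, h1, h2, h3])))
  have bound : ∀ p q, G.Adj p q → dotp χ (rho p q) ≤ 1 := by
    intro p q hpq
    rw [dotp_rho]
    rcases hval p with ⟨e1, hp⟩ | ⟨e1, hp⟩ | ⟨e1, hp⟩ | e1 <;>
      rcases hval q with ⟨e2, hq⟩ | ⟨e2, hq⟩ | ⟨e2, hq⟩ | e2 <;> rw [e1, e2] <;>
      first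
        | (norm_num; done)
        | exact absurd (hp.trans hq.symm) hpq.ne
        | (subst hp; rcases hq with rfl | rfl; exacts [absurd hpq hAjk, absurd hpq hAjl])
        | (subst hq; rcases hp with rfl | rfl; exacts [absurd hpq.symm hAjk, absurd hpq.symm hAjl])
  have eqc : ∀ p q, G.Adj p q → dotp χ (rho p q) = 1 →
      rho p q = rho i j ∨ rho p q = rho k l := by
    intro p q hpq heq
    rw [dotp_rho] at heq
    rcases hval p with ⟨e1, hp⟩ | ⟨e1, hp⟩ | ⟨e1, hp⟩ | e1 <;>
      rcases hval q with ⟨e2, hq⟩ | ⟨e2, hq⟩ | ⟨e2, hq⟩ | e2 <;> rw [e1, e2] at heq <;>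
      first
        | (refine absurd heq ?_; norm_num; done)
        | (rw [hp, hq]; exact Or.inl rfl)
        | (rw [hp, hq]; exact Or.inl (rho_comm _ _))
        | (rcases hp with rfl | rfl <;> rcases hq with rfl | rfl <;>
            first
              | exact absurd rfl hpq.ne
              | exact Or.inr rfl
              | exact Or.inr (rho_comm _ _))
  have hM1 : dotp χ (rho i j) = 1 := by
    rw [dotp_rho]
    have h1 : χ i = 1/4 := by simp [hχ]
    have h2 : χ j = 3/4 := by simp [hχ, hij.ne']
    rw [h1, h2]; norm_num
  have hM2 : dotp χ (rho k l) = 1 := by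
    rw [dotp_rho]
    have h1 : χ k = 1/2 := by simp [hχ, hik.symm, hjk.symm]
    have h2 : χ l = 1/2 := by simp [hχ, hil.symm, hjl.symm]
    rw [h1, h2]; norm_num
  exact keyMain hij hkl hjk hjl hs ht bound eqc hM1 hM2 hint

/-- propagate along walks -/
lemma spread {d : ℕ} {G : SimpleGraph (Fin d)} {S : Set (Fin d)}
    (hS : ∀ v w, G.Adj v w → v ∈ S → w ∈ S) {u w : Fin d} (p : G.Walk u w) (hu : u ∈ S) :
    w ∈ S := by
  induction p with
  | nil => exact hu
  | cons h p ih => exact ih (hS _ _ h hu)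

section structural
variable {d : ℕ} {G : SimpleGraph (Fin d)} {a : Fin d → ℝ}

/-- disjointness of positive and negative edges -/
lemma disj (hintP : IsIntegralSet (edgePolytope G ∩ {x | 0 ≤ dotp a x}))
    {i j k l : Fin d} (hij : G.Adj i j) (hkl : G.Adj k l)
    (hs : 0 < a i + a j) (ht : a k + a l < 0) :
    i ≠ k ∧ i ≠ l ∧ j ≠ k ∧ j ≠ l := by
  refine ⟨?_, ?_, ?_, ?_⟩ <;> rintro rfl
  · -- i = k : negative edge (i, l)
    by_cases h : j = l
    · subst h; linarith
    · exact keyS hij hkl h hs ht hintP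
  · -- i = l : negative edge (k, i)
    by_cases h : j = k
    · subst h; linarith
    · exact keyS hij hkl.symm h hs (by linarith) hintP
  · -- j = k
    by_cases h : i = l
    · subst h; linarith
    · exact keyS hij.symm hkl h (by linarith) ht hintP
  · -- j = l
    by_cases h : i = k
    · subst h; linarith
    · exact keyS hij.symm hkl.symm h (by linarith) (by linarith) hintP

/-- the 4-cycle lemma: values of a positive edge are the negatives of those on any
negative edge -/
lemma quad (hintP : IsIntegralSet (edgePolytope G ∩ {x | 0 ≤ dotp a x}))
    (hintN : IsIntegralSet (edgePolytope G ∩ {x | dotp a x ≤ 0}))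
    {i j k l : Fin d} (hij : G.Adj i j) (hkl : G.Adj k l)
    (hs : 0 < a i + a j) (ht : a k + a l < 0) :
    (a i = -a k ∧ a j = -a l) ∨ (a i = -a l ∧ a j = -a k) := by
  have hintN' : IsIntegralSet (edgePolytope G ∩ {x | 0 ≤ dotp (-a) x}) := by
    have hsets : {x : Fin d → ℝ | 0 ≤ dotp (-a) x} = {x | dotp a x ≤ 0} := by
      ext x; rw [Set.mem_setOf_eq, Set.mem_setOf_eq, dotp_neg, neg_nonneg]
    rw [hsets]; exact hintN
  obtain ⟨hik, hil, hjk, hjl⟩ := disj hintP hij hkl hs ht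
  -- existence of a zero matching
  have hM : (G.Adj i k ∧ G.Adj j l) ∨ (G.Adj i l ∧ G.Adj j k) := by
    by_contra hM
    push_neg at hM
    obtain ⟨hm1, hm2⟩ := hM
    by_cases c4 : G.Adj j l
    · have hc1 : ¬ G.Adj i k := fun h => hm1 h c4
      by_cases c3 : G.Adj j k
      · have hc2 : ¬ G.Adj i l := fun h => hm2 h c3
        -- i has no crosses: roles (j, i, k, l)
        exact keyQ hij.symm hkl hjk hjl hik hil hc1 hc2 (by linarith) ht hintP
      · -- k has no crosses: roles (l, k, i, j) with -a
        exact keyQ hkl.symm hij hil.symm hjl.symm hik.symm hjk.symm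
          (fun h => hc1 h.symm) (fun h => c3 h.symm)
          (by simp only [Pi.neg_apply]; linarith)
          (by simp only [Pi.neg_apply]; linarith) hintN'
    · by_cases c3 : G.Adj j k
      · have hc2 : ¬ G.Adj i l := fun h => hm2 h c3
        -- l has no crosses: roles (k, l, i, j) with -a
        exact keyQ hkl hij hik.symm hjk.symm hil.symm hjl.symm
          (fun h => hc2 h.symm) (fun h => c4 h.symm)
          (by simp only [Pi.neg_apply]; linarith)
          (by simp only [Pi.neg_apply]; linarith) hintN'
      · -- j has no crosses
        exact keyQ hij hkl hik hil hjk hjl c3 c4 hs ht hintP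
  -- the matching edges are zero edges
  rcases hM with ⟨c1, c4⟩ | ⟨c2, c3⟩
  · left
    have z1 : a i + a k = 0 := by
      rcases lt_trichotomy (a i + a k) 0 with h | h | h
      · exact (keyS hij c1 hjk hs h hintP).elim
      · exact h
      · exact (keyS c1.symm hkl hil (by linarith) ht hintP).elim
    have z2 : a j + a l = 0 := by
      rcases lt_trichotomy (a j + a l) 0 with h | h | h
      · exact (keyS hij.symm c4 hil (by linarith) h hintP).elim
      · exact h
      · exact (keyS c4.symm hkl.symm hjk (by linarith) (by linarith) hintP).elim
    exact ⟨by linarith, by linarith⟩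
  · right
    have z1 : a i + a l = 0 := by
      rcases lt_trichotomy (a i + a l) 0 with h | h | h
      · exact (keyS hij c2 hjl hs h hintP).elim
      · exact h
      · exact (keyS c2.symm hkl.symm hik (by linarith) (by linarith) hintP).elim
    have z2 : a j + a k = 0 := by
      rcases lt_trichotomy (a j + a k) 0 with h | h | h
      · exact (keyS hij.symm c3 hik (by linarith) h hintP).elim
      · exact h
      · exact (keyS c3.symm hkl hjl (by linarith) ht hintP).elim
    exact ⟨by linarith, by linarith⟩

end structural


lemma pos_transfer {s X : ℝ} (hs : 0 < s) (h : 0 ≤ s * X) : 0 ≤ X := by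
  by_contra h'
  push_neg at h'
  nlinarith

lemma neg_transfer {s X : ℝ} (hs : 0 < s) (h : s * X ≤ 0) : X ≤ 0 := by
  by_contra h'
  push_neg at h'
  nlinarith

lemma assemble {d : ℕ} {G : SimpleGraph (Fin d)} {a a' : Fin d → ℝ} {s s' : ℝ}
    (hs : 0 < s) (hs' : 0 < s')
    (hedge : ∀ p q, G.Adj p q → s * (a' p + a' q) = s' * (a p + a q))
    (hdec : Decomposes (edgePolytope G) a 0) :
    Decomposes (edgePolytope G) a' 0 ∧
    edgePolytope G ∩ {x | 0 ≤ dotp a' x} = edgePolytope G ∩ {x | 0 ≤ dotp a x} ∧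
    edgePolytope G ∩ {x | dotp a' x ≤ 0} = edgePolytope G ∩ {x | dotp a x ≤ 0} := by
  have hpt : ∀ x ∈ edgePolytope G, s * dotp a' x = s' * dotp a x := by
    intro x hx
    obtain ⟨ι, t, w, p, q, hw0, hw1, hadj, hrep⟩ := rep G hx
    rw [hrep, dotp_sum, dotp_sum, Finset.mul_sum, Finset.mul_sum]
    refine Finset.sum_congr rfl fun m hm => ?_
    rw [dotp_smul, dotp_smul, dotp_rho, dotp_rho, mul_left_comm s, mul_left_comm s',
      hedge _ _ (hadj m hm)]
  have heq1 : edgePolytope G ∩ {x | 0 ≤ dotp a' x} = edgePolytope G ∩ {x | 0 ≤ dotp a x} := by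
    ext x
    simp only [Set.mem_inter_iff, Set.mem_setOf_eq]
    constructor
    · rintro ⟨hxP, hx⟩
      refine ⟨hxP, pos_transfer hs' ?_⟩
      rw [← hpt x hxP]
      exact mul_nonneg hs.le hx
    · rintro ⟨hxP, hx⟩
      refine ⟨hxP, pos_transfer hs ?_⟩
      rw [hpt x hxP]
      exact mul_nonneg hs'.le hx
  have heq2 : edgePolytope G ∩ {x | dotp a' x ≤ 0} = edgePolytope G ∩ {x | dotp a x ≤ 0} := by
    ext x
    simp only [Set.mem_inter_iff, Set.mem_setOf_eq]
    constructor
    · rintro ⟨hxP, hx⟩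
      refine ⟨hxP, neg_transfer hs' ?_⟩
      rw [← hpt x hxP]
      exact mul_nonpos_iff.2 (Or.inl ⟨hs.le, hx⟩)
    · rintro ⟨hxP, hx⟩
      refine ⟨hxP, neg_transfer hs ?_⟩
      rw [hpt x hxP]
      exact mul_nonpos_iff.2 (Or.inl ⟨hs'.le, hx⟩)
  obtain ⟨⟨x₀, hx₀, hx₀0⟩, ⟨y₁, hy₁, hy₁lt⟩, ⟨y₂, hy₂, hy₂gt⟩, hi1, hi2⟩ := hdec
  refine ⟨⟨⟨x₀, hx₀, ?_⟩, ⟨y₁, hy₁, ?_⟩, ⟨y₂, hy₂, ?_⟩, ?_, ?_⟩, heq1, heq2⟩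
  · have h := hpt x₀ (intrinsicInterior_subset hx₀)
    rw [hx₀0, mul_zero] at h
    rcases mul_eq_zero.1 h with h' | h'
    · exact absurd h' (ne_of_gt hs)
    · exact h'
  · have h := hpt y₁ hy₁
    have h2 : s' * dotp a y₁ < 0 := mul_neg_of_pos_of_neg hs' hy₁lt
    rw [← h] at h2
    by_contra h'
    push_neg at h'
    nlinarith
  · have h := hpt y₂ hy₂
    have h2 : 0 < s' * dotp a y₂ := mul_pos hs' hy₂gt
    rw [← h] at h2
    by_contra h'
    push_neg at h'
    nlinarith
  · rw [heq1]; exact hi1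
  · rw [heq2]; exact hi2

/-- every decomposition arises from a weighting with values in {-1,0,1}
which is of Type I (no zero weight, positive edges have weights {1,1}, negative edges
{-1,-1}) or of Type II (some zero weight, positive edges have weights {1,0}, negative
edges {-1,0}). -/
theorem stmt8 {d : ℕ} (G : SimpleGraph (Fin d)) (hG : G.Connected) (a : Fin d → ℝ)
    (hdec : Decomposes (edgePolytope G) a 0) :
    ∃ a' : Fin d → ℝ, (∀ t, a' t = -1 ∨ a' t = 0 ∨ a' t = 1) ∧
      Decomposes (edgePolytope G) a' 0 ∧
      edgePolytope G ∩ {x | 0 ≤ dotp a' x} = edgePolytope G ∩ {x | 0 ≤ dotp a x} ∧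
      edgePolytope G ∩ {x | dotp a' x ≤ 0} = edgePolytope G ∩ {x | dotp a x ≤ 0} ∧
      (((∀ t, a' t ≠ 0) ∧
        (∀ i j, G.Adj i j → 0 < a' i + a' j → a' i = 1 ∧ a' j = 1) ∧
        (∀ i j, G.Adj i j → a' i + a' j < 0 → a' i = -1 ∧ a' j = -1)) ∨
       ((∃ t, a' t = 0) ∧
        (∀ i j, G.Adj i j → 0 < a' i + a' j →
          ((a' i = 1 ∧ a' j = 0) ∨ (a' i = 0 ∧ a' j = 1))) ∧
        (∀ i j, G.Adj i j → a' i + a' j < 0 →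
          ((a' i = -1 ∧ a' j = 0) ∨ (a' i = 0 ∧ a' j = -1))))) := by
  classical
  have hintP := hdec.2.2.2.1
  have hintN := hdec.2.2.2.2
  -- existence of positive and negative edges
  have hpos : ∃ i j, G.Adj i j ∧ 0 < a i + a j := by
    obtain ⟨y, hyP, hy⟩ := hdec.2.2.1
    by_contra h
    push_neg at h
    have := bnd (χ := a) (M := 0)
      (fun p q hpq => by rw [dotp_rho]; exact h p q hpq) hyP
    linarith
  have hneg : ∃ k l, G.Adj k l ∧ a k + a l < 0 := by
    obtain ⟨y, hyP, hy⟩ := hdec.2.1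
    by_contra h
    push_neg at h
    have := bnd (χ := -a) (M := 0)
      (fun p q hpq => by rw [dotp_rho]; simp only [Pi.neg_apply]; linarith [h p q hpq]) hyP
    rw [dotp_neg] at this
    linarith
  obtain ⟨i₀, j₀, hij₀, hs₀⟩ := hpos
  obtain ⟨k₀, l₀, hkl₀, ht₀⟩ := hneg
  set α : ℝ := -a k₀ with hα
  set β : ℝ := -a l₀ with hβ
  have F1 : ∀ i j, G.Adj i j → 0 < a i + a j →
      (a i = α ∧ a j = β) ∨ (a i = β ∧ a j = α) := by
    intro i j h1 h2
    rcases quad hintP hintN h1 hkl₀ h2 ht₀ with ⟨u1, u2⟩ | ⟨u1, u2⟩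
    · exact Or.inl ⟨by rw [hα]; exact u1, by rw [hβ]; exact u2⟩
    · exact Or.inr ⟨by rw [hβ]; exact u1, by rw [hα]; exact u2⟩
  have F2 : ∀ k l, G.Adj k l → a k + a l < 0 →
      (a k = -α ∧ a l = -β) ∨ (a k = -β ∧ a l = -α) := by
    intro k l h1 h2
    have h4 := F1 i₀ j₀ hij₀ hs₀
    rcases quad hintP hintN hij₀ h1 hs₀ h2 with ⟨u1, u2⟩ | ⟨u1, u2⟩ <;>
      rcases h4 with ⟨v1, v2⟩ | ⟨v1, v2⟩ <;>
      first
        | (left; constructor <;> linarith)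
        | (right; constructor <;> linarith)
  have hαβ : 0 < α + β := by
    rcases F1 i₀ j₀ hij₀ hs₀ with ⟨v1, v2⟩ | ⟨v1, v2⟩ <;> linarith
  by_cases hab : α = β
  · -- Type I
    have hα0 : 0 < α := by linarith
    have hnz : ∀ v, a v ≠ 0 := by
      intro v hv
      have hall : ∀ w : Fin d, a w = 0 := by
        intro w
        obtain ⟨p⟩ := hG.preconnected v w
        refine spread (S := {u : Fin d | a u = 0}) ?_ p hv
        intro u u' huu' hu
        simp only [Set.mem_setOf_eq] at hu ⊢
        rcases lt_trichotomy (a u + a u') 0 with h | h | h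
        · rcases F2 u u' huu' h with ⟨w1, _⟩ | ⟨w1, _⟩ <;> (exfalso; linarith)
        · linarith
        · rcases F1 u u' huu' h with ⟨w1, _⟩ | ⟨w1, _⟩ <;> (exfalso; linarith)
      rcases F1 i₀ j₀ hij₀ hs₀ with ⟨v1, _⟩ | ⟨v1, _⟩ <;>
        (have h0 := hall i₀; linarith)
    set a' : Fin d → ℝ := fun v => if 0 < a v then 1 else -1 with ha'
    have ha'pos : ∀ v, 0 < a v → a' v = 1 := fun v h => by rw [ha']; simp [h]
    have ha'neg : ∀ v, a v < 0 → a' v = -1 := fun v h => by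
      rw [ha']; simp only []; rw [if_neg (by linarith)]
    have hedge : ∀ p q, G.Adj p q → (α + β) * (a' p + a' q) = 2 * (a p + a q) := by
      intro p q hpq
      rcases lt_trichotomy (a p + a q) 0 with h | h | h
      · rcases F2 p q hpq h with ⟨w1, w2⟩ | ⟨w1, w2⟩ <;>
          (rw [ha'neg p (by linarith), ha'neg q (by linarith)]; ring_nf; linarith)
      · -- zero edge
        have hpq0 : a p ≠ 0 := hnz p
        rcases lt_or_gt_of_ne hpq0 with h' | h'
        · rw [ha'neg p h', ha'pos q (by linarith)]; ring_nf; linarith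
        · rw [ha'pos p h', ha'neg q (by linarith)]; ring_nf; linarith
      · rcases F1 p q hpq h with ⟨w1, w2⟩ | ⟨w1, w2⟩ <;>
          (rw [ha'pos p (by linarith), ha'pos q (by linarith)]; ring_nf; linarith)
    obtain ⟨hdec', heq1, heq2⟩ := assemble hαβ (by norm_num : (0:ℝ) < 2) hedge hdec
    refine ⟨a', ?_, hdec', heq1, heq2, Or.inl ⟨?_, ?_, ?_⟩⟩
    · intro t
      rw [ha']
      by_cases h : 0 < a t <;> simp [h]
    · intro t
      rw [ha']
      by_cases h : 0 < a t <;> simp [h]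
    · intro i j h1 h2
      have h3 := hedge i j h1
      have h4 : 0 < a i + a j := by nlinarith
      rcases F1 i j h1 h4 with ⟨w1, w2⟩ | ⟨w1, w2⟩ <;>
        exact ⟨ha'pos i (by linarith), ha'pos j (by linarith)⟩
    · intro i j h1 h2
      have h3 := hedge i j h1
      have h4 : a i + a j < 0 := by nlinarith
      rcases F2 i j h1 h4 with ⟨w1, w2⟩ | ⟨w1, w2⟩ <;>
        exact ⟨ha'neg i (by linarith), ha'neg j (by linarith)⟩
  · -- Type II
    obtain ⟨γ, δ, hsum, hγ0, hδγ, hδnγ, hF1, hF2⟩ :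
        ∃ γ δ : ℝ, γ + δ = α + β ∧ γ ≠ 0 ∧ δ ≠ γ ∧ δ ≠ -γ ∧
          (∀ i j, G.Adj i j → 0 < a i + a j →
            (a i = γ ∧ a j = δ) ∨ (a i = δ ∧ a j = γ)) ∧
          (∀ k l, G.Adj k l → a k + a l < 0 →
            (a k = -γ ∧ a l = -δ) ∨ (a k = -δ ∧ a l = -γ)) := by
      by_cases hα0 : α = 0
      · refine ⟨β, α, by linarith, ?_, hab, ?_, fun i j h1 h2 => (F1 i j h1 h2).symm,
          fun k l h1 h2 => (F2 k l h1 h2).symm⟩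
        · intro h; linarith
        · intro h; linarith
      · refine ⟨α, β, rfl, hα0, fun h => hab h.symm, ?_, F1, F2⟩
        intro h; linarith
    set a' : Fin d → ℝ := fun v => if a v = γ then 1 else if a v = -γ then -1 else 0 with ha'
    have hv1 : ∀ v, a v = γ → a' v = 1 := fun v h => by rw [ha']; simp [h]
    have hvm1 : ∀ v, a v = -γ → a' v = -1 := fun v h => by
      rw [ha']; simp only []
      rw [if_neg (by rw [h]; intro h'; exact hγ0 (by linarith)), if_pos h]
    have hv0 : ∀ v, a v = δ → a' v = 0 := fun v h => by
      rw [ha']; simp only []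
      rw [if_neg (by rw [h]; exact hδγ), if_neg (by rw [h]; exact hδnγ)]
    have hv0' : ∀ v, a v = -δ → a' v = 0 := fun v h => by
      rw [ha']; simp only []
      rw [if_neg (by rw [h]; intro h'; exact hδnγ (by linarith)),
        if_neg (by rw [h]; intro h'; exact hδγ (by linarith))]
    have hzero : ∀ p q, G.Adj p q → a p + a q = 0 → a' p + a' q = 0 := by
      intro p q _ h
      by_cases h1 : a p = γ
      · rw [hv1 p h1, hvm1 q (by linarith)]; ring
      by_cases h2 : a p = -γ
      · rw [hvm1 p h2, hv1 q (by linarith)]; ring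
      · have h3 : a' p = 0 := by
          rw [ha']; simp only []; rw [if_neg h1, if_neg h2]
        have h4 : a' q = 0 := by
          rw [ha']; simp only []
          rw [if_neg (by intro h'; exact h2 (by linarith)),
            if_neg (by intro h'; exact h1 (by linarith))]
        rw [h3, h4]; ring
    have hedge : ∀ p q, G.Adj p q → (α + β) * (a' p + a' q) = 1 * (a p + a q) := by
      intro p q hpq
      rcases lt_trichotomy (a p + a q) 0 with h | h | h
      · rcases hF2 p q hpq h with ⟨w1, w2⟩ | ⟨w1, w2⟩
        · rw [hvm1 p w1, hv0' q w2]; ring_nf; linarith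
        · rw [hv0' p w1, hvm1 q w2]; ring_nf; linarith
      · rw [hzero p q hpq h, h]; ring
      · rcases hF1 p q hpq h with ⟨w1, w2⟩ | ⟨w1, w2⟩
        · rw [hv1 p w1, hv0 q w2]; ring_nf; linarith
        · rw [hv0 p w1, hv1 q w2]; ring_nf; linarith
    obtain ⟨hdec', heq1, heq2⟩ := assemble hαβ (by norm_num : (0:ℝ) < 1) hedge hdec
    refine ⟨a', ?_, hdec', heq1, heq2, Or.inr ⟨?_, ?_, ?_⟩⟩
    · intro t
      rw [ha']; simp only []
      by_cases h1 : a t = γ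
      · rw [if_pos h1]; right; right; rfl
      by_cases h2 : a t = -γ
      · rw [if_neg h1, if_pos h2]; left; rfl
      · rw [if_neg h1, if_neg h2]; right; left; rfl
    · rcases hF1 i₀ j₀ hij₀ hs₀ with ⟨_, w2⟩ | ⟨w1, _⟩
      · exact ⟨j₀, hv0 j₀ w2⟩
      · exact ⟨i₀, hv0 i₀ w1⟩
    · intro i j h1 h2
      have h3 := hedge i j h1
      have h4 : 0 < a i + a j := by nlinarith
      rcases hF1 i j h1 h4 with ⟨w1, w2⟩ | ⟨w1, w2⟩
      · exact Or.inl ⟨hv1 i w1, hv0 j w2⟩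
      · exact Or.inr ⟨hv0 i w1, hv1 j w2⟩
    · intro i j h1 h2
      have h3 := hedge i j h1
      have h4 : a i + a j < 0 := by nlinarith
      rcases hF2 i j h1 h4 with ⟨w1, w2⟩ | ⟨w1, w2⟩
      · exact Or.inl ⟨hvm1 i w1, hv0' j w2⟩
      · exact Or.inr ⟨hv0' i w1, hvm1 j w2⟩
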